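/- Let g ≥ 2 be an integer. There is a constant C (depending only on g) such that P_g(N) ≤ C·g^N/N for all N ≥ 2. -/

import Mathlib

/-- `varpi g D N` counts the integers `1 ≤ n ≤ N` for which
`u_{D,g}(n) = ∑_{i=0}^{n-1} d_i g^i` is prime. -/
def varpi (g : ℕ) (D : ℕ → ℕ) (N : ℕ) : ℕ :=
  ((Finset.Icc 1 N).filter fun n => Nat.Prime (∑ i ∈ Finset.range n, D i * g ^ i)).card

/-- Extension of a finite digit tuple to a sequence of digits (zero beyond the tuple). -/
def digitExt {N g : ℕ} (d : Fin N → Fin g) : ℕ → ℕ :=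
  fun i => if h : i < N then (d ⟨i, h⟩ : ℕ) else 0

/-- `Pcount g N` is the number of digit tuples `(d_0, …, d_{N-1}) ∈ {0,…,g-1}^N`
with `d_{N-1} ≠ 0` such that `ϖ_{D,g}(N) = N - η`, where `η = 1` if `g = 2`
and `η = 0` otherwise. -/
noncomputable def Pcount (g N : ℕ) : ℕ :=
  Nat.card {d : Fin N → Fin g //
    digitExt d (N - 1) ≠ 0 ∧ varpi g (digitExt d) N = N - (if g = 2 then 1 else 0)}

/-- Base-`g` expansions with bounded digits are unique. -/
lemma base_sum_inj (g : ℕ) (hg : 0 < g) :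
    ∀ (n : ℕ) (D E : ℕ → ℕ), (∀ i, i < n → D i < g) → (∀ i, i < n → E i < g) →
    (∑ i ∈ Finset.range n, D i * g ^ i) = (∑ i ∈ Finset.range n, E i * g ^ i) →
    ∀ i, i < n → D i = E i := by
  intro n
  induction n with
  | zero => intro D E _ _ _ i hi; omega
  | succ n ih =>
    intro D E hD hE hsum i hi
    have expand : ∀ F : ℕ → ℕ,
        ∑ i ∈ Finset.range (n + 1), F i * g ^ i
          = F 0 + g * ∑ i ∈ Finset.range n, F (i + 1) * g ^ i := by
      intro F
      rw [Finset.sum_range_succ']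
      rw [Finset.mul_sum]
      simp only [pow_zero, mul_one, pow_succ]
      rw [add_comm]
      congr 1
      apply Finset.sum_congr rfl
      intro j _
      ring
    rw [expand D, expand E] at hsum
    have h0 : D 0 = E 0 := by
      have hm := congrArg (· % g) hsum
      simpa [Nat.add_mul_mod_self_left, Nat.mod_eq_of_lt (hD 0 (by omega)),
        Nat.mod_eq_of_lt (hE 0 (by omega))] using hm
    have htail : (∑ i ∈ Finset.range n, D (i + 1) * g ^ i)
        = ∑ i ∈ Finset.range n, E (i + 1) * g ^ i := by
      have : g * (∑ i ∈ Finset.range n, D (i + 1) * g ^ i)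
          = g * ∑ i ∈ Finset.range n, E (i + 1) * g ^ i := by omega
      exact Nat.eq_of_mul_eq_mul_left hg this
    rcases i with _ | j
    · exact h0
    · exact ih (fun i => D (i + 1)) (fun i => E (i + 1))
        (fun i hi => hD (i + 1) (by omega)) (fun i hi => hE (i + 1) (by omega))
        htail j (by omega)

lemma base_sum_lt (g : ℕ) (hg : 0 < g) (D : ℕ → ℕ) :
    ∀ n : ℕ, (∀ i, i < n → D i < g) → (∑ i ∈ Finset.range n, D i * g ^ i) < g ^ n := by
  intro n
  induction n with
  | zero => simp
  | succ n ih =>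
    intro hD
    rw [Finset.sum_range_succ]
    have h1 : (∑ i ∈ Finset.range n, D i * g ^ i) < g ^ n := ih fun i hi => hD i (by omega)
    have h2 : D n * g ^ n ≤ (g - 1) * g ^ n :=
      Nat.mul_le_mul_right _ (by have := hD n (by omega); omega)
    have h3 : g ^ n + (g - 1) * g ^ n = g ^ (n + 1) := by
      rw [pow_succ]
      have : g ^ n + (g - 1) * g ^ n = (1 + (g - 1)) * g ^ n := by ring
      rw [this, mul_comm]
      congr 1
      omega
    omega

/-- Chebyshev-type upper bound at the scale `g^N`, from the primorial bound. -/
lemma primecount_bound (g N : ℕ) (hg : 2 ≤ g) (hN : 2 ≤ N) :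
    N * ((Finset.range (g ^ N)).filter Nat.Prime).card ≤ 8 * g ^ N := by
  set k := (N + 1) / 2 with hk
  set P := (Finset.range (g ^ N)).filter Nat.Prime with hP
  have hsplit : (P.filter (· < g ^ k)).card + (P.filter fun p => ¬ p < g ^ k).card = P.card :=
    Finset.card_filter_add_card_filter_not _
  -- small primes
  have hNle : N ≤ 4 * g ^ (N / 2) := by
    have h1 : N / 2 < 2 ^ (N / 2) := Nat.lt_two_pow_self
    have h2 : 2 ^ (N / 2) ≤ g ^ (N / 2) := Nat.pow_le_pow_left hg _
    omega
  have hsmall : (P.filter (· < g ^ k)).card ≤ g ^ k := by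
    have : P.filter (· < g ^ k) ⊆ Finset.range (g ^ k) := by
      intro p hp
      simp only [Finset.mem_filter] at hp
      exact Finset.mem_range.mpr hp.2
    simpa using Finset.card_le_card this
  have hsmall' : N * (P.filter (· < g ^ k)).card ≤ 4 * g ^ N := by
    calc N * (P.filter (· < g ^ k)).card ≤ (4 * g ^ (N / 2)) * g ^ k :=
          Nat.mul_le_mul hNle hsmall
      _ = 4 * (g ^ (N / 2) * g ^ k) := by ring
      _ = 4 * g ^ N := by
          rw [← pow_add]
          have hkN : N / 2 + k = N := by omega
          rw [hkN]
  -- big primes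
  set c := (P.filter fun p => ¬ p < g ^ k).card with hc
  have hbig : k * c ≤ 2 * g ^ N := by
    have hp1 : (g ^ k) ^ c ≤ ∏ p ∈ P.filter (fun p => ¬ p < g ^ k), p := by
      rw [← Finset.prod_const]
      apply Finset.prod_le_prod'
      intro p hp
      simp only [Finset.mem_filter] at hp
      omega
    have hp2 : (∏ p ∈ P.filter (fun p => ¬ p < g ^ k), p) ≤ primorial (g ^ N) := by
      apply Finset.prod_le_prod_of_subset_of_one_le'
      · intro p hp
        simp only [Finset.mem_filter, Finset.mem_range, hP] at hp ⊢
        exact ⟨by omega, hp.1.2⟩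
      · intro p hp _
        simp only [Finset.mem_filter] at hp
        exact hp.2.one_lt.le
    have hp3 : primorial (g ^ N) ≤ 4 ^ g ^ N := primorial_le_4_pow _
    have hchain : 2 ^ (k * c) ≤ 2 ^ (2 * g ^ N) := by
      calc 2 ^ (k * c) = (2 ^ k) ^ c := by rw [pow_mul]
        _ ≤ (g ^ k) ^ c := Nat.pow_le_pow_left (Nat.pow_le_pow_left hg _) _
        _ ≤ primorial (g ^ N) := le_trans hp1 hp2
        _ ≤ 4 ^ g ^ N := hp3
        _ = 2 ^ (2 * g ^ N) := by rw [pow_mul]; norm_num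
    exact (Nat.pow_le_pow_iff_right (by norm_num)).mp hchain
  have hbig' : N * c ≤ 4 * g ^ N := by
    have : N ≤ 2 * k := by omega
    calc N * c ≤ (2 * k) * c := Nat.mul_le_mul_right _ this
      _ = 2 * (k * c) := by ring
      _ ≤ 2 * (2 * g ^ N) := Nat.mul_le_mul_left _ hbig
      _ = 4 * g ^ N := by ring
  calc N * P.card = N * (P.filter (· < g ^ k)).card + N * c := by
        rw [← hsplit]; ring
    _ ≤ 4 * g ^ N + 4 * g ^ N := Nat.add_le_add hsmall' hbig'
    _ = 8 * g ^ N := by ring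

lemma pcount_le (g N : ℕ) (hg : 2 ≤ g) (hN : 2 ≤ N) :
    Pcount g N ≤ ((Finset.range (g ^ N)).filter Nat.Prime).card * (2 * g) := by
  classical
  set P := (Finset.range (g ^ N)).filter Nat.Prime with hP
  set T := P ×ˢ Finset.range (2 * g) with hT
  have hdig : ∀ (d : Fin N → Fin g) (i : ℕ), digitExt d i < g := by
    intro d i
    unfold digitExt
    split
    · exact (d _).2
    · omega
  have hu_lt : ∀ (d : Fin N → Fin g) (n : ℕ),
      (∑ i ∈ Finset.range n, digitExt d i * g ^ i) < g ^ n :=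
    fun d n => base_sum_lt g (by omega) _ n (fun i _ => hdig d i)
  -- key claim: one of u(N), u(N-1) is prime
  have key : ∀ d : Fin N → Fin g,
      varpi g (digitExt d) N = N - (if g = 2 then 1 else 0) →
      Nat.Prime (∑ i ∈ Finset.range N, digitExt d i * g ^ i) ∨
      Nat.Prime (∑ i ∈ Finset.range (N - 1), digitExt d i * g ^ i) := by
    intro d hv
    by_contra hcon
    push_neg at hcon
    unfold varpi at hv
    set F := (Finset.Icc 1 N).filter
      (fun n => Nat.Prime (∑ i ∈ Finset.range n, digitExt d i * g ^ i)) with hF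
    have hsub : F ⊆ ((Finset.Icc 1 N).erase N).erase (N - 1) := by
      intro n hn
      simp only [hF, Finset.mem_filter] at hn
      rw [Finset.mem_erase, Finset.mem_erase]
      refine ⟨?_, ?_, hn.1⟩
      · intro h; rw [h] at hn; exact hcon.2 hn.2
      · intro h; rw [h] at hn; exact hcon.1 hn.2
    have hcard : F.card ≤ N - 2 := by
      have h1 : N ∈ Finset.Icc 1 N := by simp; omega
      have h2 : N - 1 ∈ (Finset.Icc 1 N).erase N := by
        rw [Finset.mem_erase]; simp; omega
      have := Finset.card_le_card hsub
      rw [Finset.card_erase_of_mem h2, Finset.card_erase_of_mem h1,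
        Nat.card_Icc] at this
      omega
    rw [hv] at hcard
    split at hcard <;> omega
  -- the injection
  have hinj : Pcount g N ≤ Nat.card {x // x ∈ T} := by
    unfold Pcount
    apply Nat.card_le_card_of_injective
      (f := fun s : {d : Fin N → Fin g //
          digitExt d (N - 1) ≠ 0 ∧ varpi g (digitExt d) N = N - (if g = 2 then 1 else 0)} =>
        if hp : Nat.Prime (∑ i ∈ Finset.range N, digitExt s.1 i * g ^ i) then
          (⟨((∑ i ∈ Finset.range N, digitExt s.1 i * g ^ i), 0), by
            rw [hT, Finset.mem_product, hP, Finset.mem_filter, Finset.mem_range]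
            exact ⟨⟨hu_lt s.1 N, hp⟩, Finset.mem_range.mpr (by omega)⟩⟩ : {x // x ∈ T})
        else
          ⟨((∑ i ∈ Finset.range (N - 1), digitExt s.1 i * g ^ i),
              g + digitExt s.1 (N - 1)), by
            rw [hT, Finset.mem_product, hP, Finset.mem_filter, Finset.mem_range]
            refine ⟨⟨?_, (key s.1 s.2.2).resolve_left hp⟩, Finset.mem_range.mpr ?_⟩
            · exact lt_of_lt_of_le (hu_lt s.1 (N - 1))
                (Nat.pow_le_pow_right (by omega) (by omega))
            · have := hdig s.1 (N - 1); omega⟩)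
    intro a b hab
    beta_reduce at hab
    have hdigeq : (∀ i, i < N → digitExt a.1 i = digitExt b.1 i) → a = b := by
      intro h
      apply Subtype.ext
      funext j
      have hj := h j.1 j.2
      unfold digitExt at hj
      rw [dif_pos j.2, dif_pos j.2] at hj
      exact Fin.ext (by simpa using hj)
    by_cases hpa : Nat.Prime (∑ i ∈ Finset.range N, digitExt a.1 i * g ^ i) <;>
      by_cases hpb : Nat.Prime (∑ i ∈ Finset.range N, digitExt b.1 i * g ^ i)
    · rw [dif_pos hpa, dif_pos hpb] at hab
      have h1 := congrArg (fun x => (x : ℕ × ℕ).1) (congrArg Subtype.val hab)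
      simp only at h1
      exact hdigeq (base_sum_inj g (by omega) N _ _ (fun i _ => hdig a.1 i)
        (fun i _ => hdig b.1 i) h1)
    · rw [dif_pos hpa, dif_neg hpb] at hab
      have h2 := congrArg (fun x => (x : ℕ × ℕ).2) (congrArg Subtype.val hab)
      simp only at h2
      omega
    · rw [dif_neg hpa, dif_pos hpb] at hab
      have h2 := congrArg (fun x => (x : ℕ × ℕ).2) (congrArg Subtype.val hab)
      simp only at h2
      omega
    · rw [dif_neg hpa, dif_neg hpb] at hab
      have h1 := congrArg (fun x => (x : ℕ × ℕ).1) (congrArg Subtype.val hab)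
      have h2 := congrArg (fun x => (x : ℕ × ℕ).2) (congrArg Subtype.val hab)
      simp only at h1 h2
      have htail := base_sum_inj g (by omega) (N - 1) _ _ (fun i _ => hdig a.1 i)
        (fun i _ => hdig b.1 i) h1
      apply hdigeq
      intro i hi
      rcases Nat.lt_or_ge i (N - 1) with h | h
      · exact htail i h
      · have : i = N - 1 := by omega
        rw [this]; omega
  rw [Nat.card_eq_finsetCard] at hinj
  rw [hT, Finset.card_product, Finset.card_range] at hinj
  exact hinj

theorem stmt_1 (g : ℕ) (hg : 2 ≤ g) :
    ∃ C : ℝ, ∀ N : ℕ, 2 ≤ N → (Pcount g N : ℝ) ≤ C * (g : ℝ) ^ N / N := by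
  refine ⟨16 * g, fun N hN => ?_⟩
  have h1 := pcount_le g N hg hN
  have h2 := primecount_bound g N hg hN
  have h3 : N * Pcount g N ≤ 16 * g * g ^ N := by
    calc N * Pcount g N
        ≤ N * (((Finset.range (g ^ N)).filter Nat.Prime).card * (2 * g)) :=
          Nat.mul_le_mul_left _ h1
      _ = (N * ((Finset.range (g ^ N)).filter Nat.Prime).card) * (2 * g) := by ring
      _ ≤ (8 * g ^ N) * (2 * g) := Nat.mul_le_mul_right _ h2
      _ = 16 * g * g ^ N := by ring
  have h4 : Pcount g N * N ≤ 16 * g * g ^ N := by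
    calc Pcount g N * N = N * Pcount g N := Nat.mul_comm _ _
      _ ≤ 16 * g * g ^ N := h3
  have hNpos : (0 : ℝ) < N := by exact_mod_cast Nat.lt_of_lt_of_le Nat.zero_lt_two hN
  rw [le_div_iff₀ hNpos]
  exact_mod_cast h4
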